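/- Let P ∈ ℤ[X] have nonnegative coefficients, nonzero constant term, and P(1) = 6. If P admits two essentially distinct factorizations into two nonconstant factors in the monoid of polynomials with nonnegative integer coefficients, then P = 1 + X^b + X^{2b} + X^{3b} + X^{4b} + X^{5b} for some positive integer b. -/

import Mathlib

open Polynomial

def NNcoeff (P : Polynomial ℤ) : Prop := ∀ n, 0 ≤ P.coeff n


noncomputable def polyOf (M : Multiset ℕ) : Polynomial ℤ := (M.map (X ^ ·)).sum

lemma coeff_polyOf (M : Multiset ℕ) (n : ℕ) : (polyOf M).coeff n = M.count n := by
  induction M using Multiset.induction with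
  | empty => simp [polyOf]
  | cons a s ih =>
    simp only [polyOf, Multiset.map_cons, Multiset.sum_cons, coeff_add, coeff_X_pow,
      Multiset.count_cons] at *
    rw [ih]
    split_ifs with h1 <;> simp [h1, eq_comm] <;> omega

lemma polyOf_inj {M N : Multiset ℕ} (h : polyOf M = polyOf N) : M = N := by
  refine Multiset.ext.mpr fun n => ?_
  have := congrArg (fun p => Polynomial.coeff p n) h
  simp only [coeff_polyOf] at this
  exact_mod_cast this

lemma expand1 (a c d : ℕ) : (1 + X^a) * (1 + X^c + X^d) = polyOf {0,a,c,a+c,d,a+d} := by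
  simp [polyOf, pow_add]
  ring

lemma expand2 (a e : ℕ) : (1 + X^a) * (C 2 + X^e) = polyOf {0,0,a,a,e,a+e} := by
  have : (C 2 : Polynomial ℤ) = 1 + 1 := by norm_num
  simp [polyOf, pow_add, this]
  ring


lemma eval_one_eq (Q : Polynomial ℤ) :
    Q.eval 1 = ∑ i ∈ Finset.range (Q.natDegree + 1), Q.coeff i := by
  rw [eval_eq_sum_range]; simp

lemma lead_pos (Q : Polynomial ℤ) (hQ : NNcoeff Q) (h0 : Q.coeff 0 ≠ 0) :
    1 ≤ Q.coeff Q.natDegree := by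
  have hne : Q ≠ 0 := fun h => h0 (by simp [h])
  have : Q.coeff Q.natDegree ≠ 0 := Polynomial.leadingCoeff_ne_zero.mpr hne
  have := hQ Q.natDegree
  omega

lemma two_le (Q : Polynomial ℤ) (hQ : NNcoeff Q) (h0 : Q.coeff 0 ≠ 0) (hd : 0 < Q.natDegree) :
    2 ≤ Q.eval 1 := by
  have h0' : 1 ≤ Q.coeff 0 := by have := hQ 0; omega
  have hl : 1 ≤ Q.coeff Q.natDegree := lead_pos Q hQ h0
  have hsub : ({0, Q.natDegree} : Finset ℕ) ⊆ Finset.range (Q.natDegree + 1) := by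
    intro i hi; simp at hi; rcases hi with h | h <;> simp [h] <;> omega
  have hle : ∑ i ∈ ({0, Q.natDegree} : Finset ℕ), Q.coeff i ≤
      ∑ i ∈ Finset.range (Q.natDegree + 1), Q.coeff i :=
    Finset.sum_le_sum_of_subset_of_nonneg hsub (fun i _ _ => hQ i)
  rw [Finset.sum_pair (by omega : (0:ℕ) ≠ Q.natDegree)] at hle
  rw [eval_one_eq]
  omega

lemma support_facts (Q : Polynomial ℤ) (hQ : NNcoeff Q) (h0 : Q.coeff 0 ≠ 0)
    (hd : 0 < Q.natDegree) :
    1 ≤ Q.coeff 0 ∧ 1 ≤ Q.coeff Q.natDegree ∧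
    Q.coeff 0 + Q.coeff Q.natDegree +
      ∑ i ∈ Finset.range (Q.natDegree + 1) \ {0, Q.natDegree}, Q.coeff i = Q.eval 1 ∧
    0 ≤ ∑ i ∈ Finset.range (Q.natDegree + 1) \ {0, Q.natDegree}, Q.coeff i := by
  have h0' : 1 ≤ Q.coeff 0 := by have := hQ 0; omega
  have hl : 1 ≤ Q.coeff Q.natDegree := lead_pos Q hQ h0
  have hsub : ({0, Q.natDegree} : Finset ℕ) ⊆ Finset.range (Q.natDegree + 1) := by
    intro i hi; simp at hi; rcases hi with h | h <;> simp [h]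
  have hsd := Finset.sum_sdiff (f := fun i => Q.coeff i) hsub
  beta_reduce at hsd
  rw [Finset.sum_pair (by omega : (0:ℕ) ≠ Q.natDegree)] at hsd
  refine ⟨h0', hl, ?_, ?_⟩
  · rw [eval_one_eq]; omega
  · exact Finset.sum_nonneg fun i _ => hQ i

lemma shape2 (Q : Polynomial ℤ) (hQ : NNcoeff Q) (h0 : Q.coeff 0 ≠ 0) (hd : 0 < Q.natDegree)
    (he : Q.eval 1 = 2) : ∃ a, 0 < a ∧ Q = 1 + X ^ a := by
  obtain ⟨h1, h2, h3, h4⟩ := support_facts Q hQ h0 hd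
  rw [he] at h3
  have h5 : ∑ i ∈ Finset.range (Q.natDegree + 1) \ {0, Q.natDegree}, Q.coeff i = 0 := by omega
  have hz := (Finset.sum_eq_zero_iff_of_nonneg (fun i _ => hQ i)).mp h5
  refine ⟨Q.natDegree, hd, ?_⟩
  ext i
  simp only [coeff_add, coeff_one, coeff_X_pow]
  by_cases hi0 : i = 0
  · subst hi0; rw [if_pos rfl, if_neg (by omega)]; omega
  by_cases hin : i = Q.natDegree
  · rw [hin, if_neg (by omega), if_pos rfl]; omega
  rw [if_neg hi0, if_neg hin]
  by_cases hbig : Q.natDegree < i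
  · exact Q.coeff_eq_zero_of_natDegree_lt hbig
  · exact hz i (by simp [hi0, hin]; omega)

lemma shape3 (Q : Polynomial ℤ) (hQ : NNcoeff Q) (h0 : Q.coeff 0 ≠ 0) (hd : 0 < Q.natDegree)
    (he : Q.eval 1 = 3) :
    (∃ e, 0 < e ∧ Q = C 2 + X ^ e) ∨ (∃ c d, 0 < c ∧ c ≤ d ∧ Q = 1 + X ^ c + X ^ d) := by
  obtain ⟨h1, h2, h3, h4⟩ := support_facts Q hQ h0 hd
  rw [he] at h3
  set n := Q.natDegree with hn
  set sd := Finset.range (n + 1) \ {0, n} with hsd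
  have hmem : ∀ i, i ∈ sd ↔ (i < n + 1 ∧ i ≠ 0 ∧ i ≠ n) := by
    intro i; simp [hsd]; try tauto
  by_cases hs : ∑ i ∈ sd, Q.coeff i = 0
  · have hz := (Finset.sum_eq_zero_iff_of_nonneg (fun i _ => hQ i)).mp hs
    by_cases hc0 : Q.coeff 0 = 2
    · left
      refine ⟨n, hd, ?_⟩
      ext i
      simp only [coeff_add, coeff_C, coeff_X_pow]
      by_cases hbig : n < i
      · rw [Q.coeff_eq_zero_of_natDegree_lt hbig]
        first | (split_ifs <;> omega) | omega
      by_cases hi0 : i = 0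
      · subst hi0; first | (split_ifs <;> omega) | omega
      by_cases hin : i = n
      · subst hin; first | (split_ifs <;> omega) | omega
      rw [hz i ((hmem i).mpr ⟨by omega, hi0, hin⟩)]
      first | (split_ifs <;> omega) | omega
    · right
      refine ⟨n, n, hd, le_refl n, ?_⟩
      ext i
      simp only [coeff_add, coeff_one, coeff_X_pow]
      by_cases hbig : n < i
      · rw [Q.coeff_eq_zero_of_natDegree_lt hbig]
        first | (split_ifs <;> omega) | omega
      by_cases hi0 : i = 0
      · subst hi0; first | (split_ifs <;> omega) | omega
      by_cases hin : i = n
      · subst hin; first | (split_ifs <;> omega) | omega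
      rw [hz i ((hmem i).mpr ⟨by omega, hi0, hin⟩)]
      first | (split_ifs <;> omega) | omega
  · have hs1 : ∑ i ∈ sd, Q.coeff i = 1 := by omega
    obtain ⟨c, hcmem, hcpos⟩ : ∃ c ∈ sd, 0 < Q.coeff c := by
      by_contra hno
      push_neg at hno
      exact hs (Finset.sum_eq_zero fun i hi => le_antisymm (hno i hi) (hQ i))
    have herase := Finset.add_sum_erase sd (fun i => Q.coeff i) hcmem
    beta_reduce at herase
    have hrest : 0 ≤ ∑ i ∈ sd.erase c, Q.coeff i :=
      Finset.sum_nonneg fun i _ => hQ i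
    have hc1 : Q.coeff c = 1 := by omega
    have hrest0 : ∑ i ∈ sd.erase c, Q.coeff i = 0 := by omega
    have hz := (Finset.sum_eq_zero_iff_of_nonneg (fun i _ => hQ i)).mp hrest0
    obtain ⟨hclt, hc0, hcn⟩ := (hmem c).mp hcmem
    right
    refine ⟨c, n, by omega, by omega, ?_⟩
    ext i
    simp only [coeff_add, coeff_one, coeff_X_pow]
    by_cases hbig : n < i
    · rw [Q.coeff_eq_zero_of_natDegree_lt hbig]
      first | (split_ifs <;> omega) | omega
    by_cases hi0 : i = 0
    · subst hi0; first | (split_ifs <;> omega) | omega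
    by_cases hic : i = c
    · subst hic; first | (split_ifs <;> omega) | omega
    by_cases hin : i = n
    · subst hin; first | (split_ifs <;> omega) | omega
    rw [hz i (Finset.mem_erase.mpr ⟨hic, (hmem i).mpr ⟨by omega, hi0, hin⟩⟩)]
    first | (split_ifs <;> omega) | omega

lemma core (a c d a' c' d' : ℕ) (ha : 0 < a) (hc : 0 < c) (hcd : c ≤ d)
    (ha' : 0 < a') (hc' : 0 < c') (hcd' : c' ≤ d') (hlt : a < a')
    (hM : ({a, c, a+c, d, a+d} : Multiset ℕ) = {a', c', a'+c', d', a'+d'}) :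
    c = 2*a ∧ d = 4*a ∧ a' = 3*a ∧ c' = a ∧ d' = 2*a := by
  have hmL : a+d ∈ ({a', c', a'+c', d', a'+d'} : Multiset ℕ) := by rw [← hM]; simp
  have hmR : a'+d' ∈ ({a, c, a+c, d, a+d} : Multiset ℕ) := by rw [hM]; simp
  simp only [Multiset.insert_eq_cons, Multiset.mem_cons, Multiset.mem_singleton] at hmL hmR
  have hmax : a + d = a' + d' := by omega
  rcases lt_or_ge c a with hca | hca
  · -- c < a : contradiction
    exfalso
    have hm1 : c ∈ ({a', c', a'+c', d', a'+d'} : Multiset ℕ) := by rw [← hM]; simp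
    have hm2 : c' ∈ ({a, c, a+c, d, a+d} : Multiset ℕ) := by rw [hM]; simp
    simp only [Multiset.insert_eq_cons, Multiset.mem_cons, Multiset.mem_singleton] at hm1 hm2
    have hcc : c' = c := by omega
    rw [hcc] at hM
    have e1 : ({a, c, a+c, d, a+d} : Multiset ℕ) = c ::ₘ {a, a+c, d, a+d} := by
      refine Multiset.ext.mpr fun n => ?_
      simp [Multiset.count_cons, Multiset.count_singleton]
      split_ifs <;> omega
    have e2 : ({a', c, a'+c, d', a'+d'} : Multiset ℕ) = c ::ₘ {a', a'+c, d', a'+d'} := by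
      refine Multiset.ext.mpr fun n => ?_
      simp [Multiset.count_cons, Multiset.count_singleton]
      split_ifs <;> omega
    rw [e1, e2] at hM
    have h4 := (Multiset.cons_inj_right c).mp hM
    have hsum4 := congrArg Multiset.sum h4
    simp only [Multiset.insert_eq_cons, Multiset.sum_cons, Multiset.sum_singleton] at hsum4
    omega
  · -- a ≤ c
    have hm1 : a ∈ ({a', c', a'+c', d', a'+d'} : Multiset ℕ) := by rw [← hM]; simp
    have hm2 : c' ∈ ({a, c, a+c, d, a+d} : Multiset ℕ) := by rw [hM]; simp
    simp only [Multiset.insert_eq_cons, Multiset.mem_cons, Multiset.mem_singleton] at hm1 hm2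
    have hca' : c' = a := by omega
    rw [hca'] at hM
    have e2 : ({a', a, a'+a, d', a'+d'} : Multiset ℕ) = a ::ₘ {a', a'+a, d', a'+d'} := by
      refine Multiset.ext.mpr fun n => ?_
      simp [Multiset.count_cons, Multiset.count_singleton]
      split_ifs <;> omega
    rw [e2] at hM
    have h4 := (Multiset.cons_inj_right a).mp hM
    rw [← hmax] at h4
    have e3 : ({c, a+c, d, a+d} : Multiset ℕ) = (a+d) ::ₘ {c, a+c, d} := by
      refine Multiset.ext.mpr fun n => ?_
      simp [Multiset.count_cons, Multiset.count_singleton]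
      split_ifs <;> omega
    have e4 : ({a', a'+a, d', a+d} : Multiset ℕ) = (a+d) ::ₘ {a', a'+a, d'} := by
      refine Multiset.ext.mpr fun n => ?_
      simp [Multiset.count_cons, Multiset.count_singleton]
      split_ifs <;> omega
    rw [e3, e4] at h4
    have h3 := (Multiset.cons_inj_right (a+d)).mp h4
    have hsum3 := congrArg Multiset.sum h3
    simp only [Multiset.insert_eq_cons, Multiset.sum_cons, Multiset.sum_singleton] at hsum3
    have hm3 : c ∈ ({a', a'+a, d'} : Multiset ℕ) := by rw [← h3]; simp
    simp only [Multiset.insert_eq_cons, Multiset.mem_cons, Multiset.mem_singleton] at hm3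
    have hdc : d' = c := by omega
    rw [hdc] at h3
    have e5 : ({a', a'+a, c} : Multiset ℕ) = c ::ₘ {a', a'+a} := by
      refine Multiset.ext.mpr fun n => ?_
      simp [Multiset.count_cons, Multiset.count_singleton]
      split_ifs <;> omega
    have e6 : ({c, a+c, d} : Multiset ℕ) = c ::ₘ {a+c, d} := rfl
    rw [e5, e6] at h3
    have h2 := (Multiset.cons_inj_right c).mp h3
    have hm4 : a+c ∈ ({a', a'+a} : Multiset ℕ) := by rw [← h2]; simp
    simp only [Multiset.insert_eq_cons, Multiset.mem_cons, Multiset.mem_singleton] at hm4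
    have hsum2 := congrArg Multiset.sum h2
    simp only [Multiset.insert_eq_cons, Multiset.sum_cons, Multiset.sum_singleton] at hsum2
    omega

lemma core2 (a e a' e' : ℕ) (ha : 0 < a) (he : 0 < e) (ha' : 0 < a') (he' : 0 < e')
    (hM : ({0, 0, a, a, e, a+e} : Multiset ℕ) = {0, 0, a', a', e', a'+e'}) :
    a = a' ∧ e = e' := by
  have hmL : a+e ∈ ({0, 0, a', a', e', a'+e'} : Multiset ℕ) := by rw [← hM]; simp
  have hmR : a'+e' ∈ ({0, 0, a, a, e, a+e} : Multiset ℕ) := by rw [hM]; simp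
  simp only [Multiset.insert_eq_cons, Multiset.mem_cons, Multiset.mem_singleton] at hmL hmR
  have hsum := congrArg Multiset.sum hM
  simp only [Multiset.insert_eq_cons, Multiset.sum_cons, Multiset.sum_singleton] at hsum
  omega

set_option maxHeartbeats 1000000 in
lemma main2 (S T S' T' : Polynomial ℤ)
    (hS : NNcoeff S) (hT : NNcoeff T) (hS' : NNcoeff S') (hT' : NNcoeff T')
    (hS0 : S.coeff 0 ≠ 0) (hT0 : T.coeff 0 ≠ 0) (hS'0 : S'.coeff 0 ≠ 0) (hT'0 : T'.coeff 0 ≠ 0)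
    (hdS : 0 < S.natDegree) (hdT : 0 < T.natDegree)
    (hdS' : 0 < S'.natDegree) (hdT' : 0 < T'.natDegree)
    (heS : S.eval 1 = 2) (heT : T.eval 1 = 3) (heS' : S'.eval 1 = 2) (heT' : T'.eval 1 = 3)
    (h12 : S * T = S' * T') (hne : ¬(S = S' ∧ T = T')) :
    ∃ b : ℕ, 0 < b ∧
      S * T = 1 + X ^ b + X ^ (2 * b) + X ^ (3 * b) + X ^ (4 * b) + X ^ (5 * b) := by
  obtain ⟨a, ha, hSa⟩ := shape2 S hS hS0 hdS heS
  obtain ⟨a', ha', hSa'⟩ := shape2 S' hS' hS'0 hdS' heS'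
  have hSne : S ≠ 0 := fun h => by simp [h] at heS
  have haa : a ≠ a' := by
    intro h
    apply hne
    have hSS : S = S' := by rw [hSa, hSa', h]
    refine ⟨hSS, ?_⟩
    rw [hSS] at h12
    have hS'ne : S' ≠ 0 := by rw [← hSS]; exact hSne
    exact mul_left_cancel₀ hS'ne h12
  rcases shape3 T hT hT0 hdT heT with ⟨e, he, hTe⟩ | ⟨c, d, hc, hcd, hTf⟩ <;>
    rcases shape3 T' hT' hT'0 hdT' heT' with ⟨e', he', hTe'⟩ | ⟨c', d', hc', hcd', hTf'⟩
  · -- both 2 + X^e : contradiction via core2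
    exfalso
    rw [hSa, hSa', hTe, hTe', expand2, expand2] at h12
    obtain ⟨h1, h2⟩ := core2 a e a' e' ha he ha' he' (polyOf_inj h12)
    exact haa h1
  · -- mixed: coeff 0 gives 2 = 1
    exfalso
    rw [hSa, hSa', hTe, hTf', expand2, expand1] at h12
    have hM := polyOf_inj h12
    have hcount := congrArg (Multiset.count 0) hM
    simp [Multiset.count_cons, Multiset.count_singleton, ha.ne', he.ne', ha'.ne', hc'.ne',
      Nat.add_eq_zero, (show d' ≠ 0 by omega)] at hcount
    split_ifs at hcount <;> omega
  · -- mixed other way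
    exfalso
    rw [hSa, hSa', hTf, hTe', expand1, expand2] at h12
    have hM := polyOf_inj h12
    have hcount := congrArg (Multiset.count 0) hM
    simp [Multiset.count_cons, Multiset.count_singleton, ha.ne', he'.ne', ha'.ne', hc.ne',
      Nat.add_eq_zero, (show d ≠ 0 by omega)] at hcount
    split_ifs at hcount <;> omega
  · -- both triples
    rw [hSa, hSa', hTf, hTf', expand1, expand1] at h12
    have hM := polyOf_inj h12
    have hM5 := (Multiset.cons_inj_right 0).mp hM
    rcases Nat.lt_or_ge a a' with hlt | hge
    · obtain ⟨e1, e2, e3, e4, e5⟩ := core a c d a' c' d' ha hc hcd ha' hc' hcd' hlt hM5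
      refine ⟨a, ha, ?_⟩
      rw [hSa, hTf, e1, e2]
      ring
    · have hlt' : a' < a := by omega
      obtain ⟨e1, e2, e3, e4, e5⟩ := core a' c' d' a c d ha' hc' hcd' ha hc hcd hlt' hM5.symm
      refine ⟨a', ha', ?_⟩
      rw [hSa, hTf, e3, e4, e5]
      ring

def IrredNN (P : Polynomial ℤ) : Prop :=
  NNcoeff P ∧ P ≠ 1 ∧
    ∀ S T : Polynomial ℤ, NNcoeff S → NNcoeff T → P = S * T → S = 1 ∨ T = 1

theorem stmt7 (P : Polynomial ℤ) (hP : ∀ n, 0 ≤ P.coeff n)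
    (hc : P.coeff 0 ≠ 0) (hsum : P.eval 1 = 6)
    (S T S' T' : Polynomial ℤ)
    (hS : NNcoeff S) (hT : NNcoeff T) (hS' : NNcoeff S') (hT' : NNcoeff T')
    (hdS : 0 < S.natDegree) (hdT : 0 < T.natDegree)
    (hdS' : 0 < S'.natDegree) (hdT' : 0 < T'.natDegree)
    (h1 : P = S * T) (h2 : P = S' * T')
    (hdist : ¬((S = S' ∧ T = T') ∨ (S = T' ∧ T = S'))) :
    ∃ b : ℕ, 0 < b ∧
      P = 1 + X ^ b + X ^ (2 * b) + X ^ (3 * b) + X ^ (4 * b) + X ^ (5 * b) := by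
  push_neg at hdist
  obtain ⟨hd1, hd2⟩ := hdist
  -- coeff 0 facts
  have hc1 : S.coeff 0 * T.coeff 0 ≠ 0 := by
    rw [← Polynomial.mul_coeff_zero, ← h1]; exact hc
  have hc2 : S'.coeff 0 * T'.coeff 0 ≠ 0 := by
    rw [← Polynomial.mul_coeff_zero, ← h2]; exact hc
  have hS0 : S.coeff 0 ≠ 0 := fun h => hc1 (by rw [h, zero_mul])
  have hT0 : T.coeff 0 ≠ 0 := fun h => hc1 (by rw [h, mul_zero])
  have hS'0 : S'.coeff 0 ≠ 0 := fun h => hc2 (by rw [h, zero_mul])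
  have hT'0 : T'.coeff 0 ≠ 0 := fun h => hc2 (by rw [h, mul_zero])
  -- eval 1 facts
  have hev1 : S.eval 1 * T.eval 1 = 6 := by
    have := hsum; rw [h1] at this; simpa using this
  have hev2 : S'.eval 1 * T'.eval 1 = 6 := by
    have := hsum; rw [h2] at this; simpa using this
  have hbS := two_le S hS hS0 hdS
  have hbT := two_le T hT hT0 hdT
  have hbS' := two_le S' hS' hS'0 hdS'
  have hbT' := two_le T' hT' hT'0 hdT'
  have hcases : (S.eval 1 = 2 ∧ T.eval 1 = 3) ∨ (S.eval 1 = 3 ∧ T.eval 1 = 2) := by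
    rcases le_or_gt (S.eval 1) 2 with h | h
    · left; constructor <;> nlinarith
    · right
      have h3 : 3 ≤ S.eval 1 := h
      have : T.eval 1 < 3 := by nlinarith
      have hT2 : T.eval 1 = 2 := by omega
      rw [hT2] at hev1
      constructor <;> omega
  have hcases' : (S'.eval 1 = 2 ∧ T'.eval 1 = 3) ∨ (S'.eval 1 = 3 ∧ T'.eval 1 = 2) := by
    rcases le_or_gt (S'.eval 1) 2 with h | h
    · left; constructor <;> nlinarith
    · right
      have h3 : 3 ≤ S'.eval 1 := h
      have : T'.eval 1 < 3 := by nlinarith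
      have hT2 : T'.eval 1 = 2 := by omega
      rw [hT2] at hev2
      constructor <;> omega
  have h12 : S * T = S' * T' := by rw [← h1, ← h2]
  rcases hcases with ⟨e1, e2⟩ | ⟨e1, e2⟩ <;> rcases hcases' with ⟨e3, e4⟩ | ⟨e3, e4⟩
  · obtain ⟨b, hb, heq⟩ := main2 S T S' T' hS hT hS' hT' hS0 hT0 hS'0 hT'0
      hdS hdT hdS' hdT' e1 e2 e3 e4 h12 (fun h => hd1 h.1 h.2)
    exact ⟨b, hb, by rw [h1, heq]⟩
  · obtain ⟨b, hb, heq⟩ := main2 S T T' S' hS hT hT' hS' hS0 hT0 hT'0 hS'0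
      hdS hdT hdT' hdS' e1 e2 e4 e3 (by rw [h12, mul_comm]) (fun h => hd2 h.1 h.2)
    exact ⟨b, hb, by rw [h1, heq]⟩
  · obtain ⟨b, hb, heq⟩ := main2 T S S' T' hT hS hS' hT' hT0 hS0 hS'0 hT'0
      hdT hdS hdS' hdT' e2 e1 e3 e4 (by rw [mul_comm, h12]) (fun h => hd2 h.2 h.1)
    exact ⟨b, hb, by rw [h1, mul_comm, heq]⟩
  · obtain ⟨b, hb, heq⟩ := main2 T S T' S' hT hS hT' hS' hT0 hS0 hT'0 hS'0
      hdT hdS hdT' hdS' e2 e1 e4 e3 (by rw [mul_comm, h12, mul_comm]) (fun h => hd1 h.2 h.1)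
    exact ⟨b, hb, by rw [h1, mul_comm, heq]⟩
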